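/- Identification of the concurrent counterfactual mean under control by only-concurrent outcome regression (control-arm part of Theorem 1, statement 1): under assumptions (I-0), (C-0) and (P-0), one has 𝔼[Y⁰ | V=1] = Σ_{(w,e): 𝒫(W=w,E=e,V=1)>0} μ_oc(0,w,e) · p(w,e | V=1). -/

import Mathlib

open MeasureTheory Finset

/-- Conditional expectation given an event: `𝔼[X | B] := 𝔼[X · 1_B] / 𝒫(B)`. -/
noncomputable def condMean {Ω : Type*} [MeasurableSpace Ω] (P : Measure Ω)
    (X : Ω → ℝ) (B : Set Ω) : ℝ :=
  (∫ ω, B.indicator X ω ∂P) / (P B).toReal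

/-- Identification of the concurrent counterfactual mean under control by only-concurrent
outcome regression (control-arm part of Theorem 1, statement 1): under (I-0), (C-0), (P-0),
`𝔼[Y⁰ | V=1] = Σ_{(w,e) : 𝒫(W=w,E=e,V=1)>0} μ_oc(0,w,e) · p(w,e | V=1)`. -/
theorem concurrent_mean_control_identification_oc
    {Ω : Type*} [MeasurableSpace Ω] (P : Measure Ω) [IsProbabilityMeasure P]
    {𝓦 ℰ : Type*} [Fintype 𝓦] [Fintype ℰ] [Nonempty 𝓦] [Nonempty ℰ]
    [MeasurableSpace 𝓦] [MeasurableSingletonClass 𝓦]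
    [MeasurableSpace ℰ] [MeasurableSingletonClass ℰ]
    (W : Ω → 𝓦) (E : Ω → ℰ) (V : Ω → Fin 2) {K : ℕ} (A : Ω → Fin (K + 1))
    (k : Fin (K + 1)) (Y Yk Y0 : Ω → ℝ)
    (hW : Measurable W) (hE : Measurable E) (hV : Measurable V) (hA : Measurable A)
    (hY : Integrable Y P) (hYk : Integrable Yk P) (hY0 : Integrable Y0 P)
    (hV1 : 0 < P {ω | V ω = 1})
    -- (I-0) weak A-ignorability for arm 0
    (hI0 : ∀ (w : 𝓦) (e : ℰ), 0 < P {ω | A ω = 0 ∧ W ω = w ∧ E ω = e ∧ V ω = 1} →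
      condMean P Y0 {ω | W ω = w ∧ E ω = e ∧ V ω = 1} =
        condMean P Y0 {ω | A ω = 0 ∧ W ω = w ∧ E ω = e ∧ V ω = 1})
    -- (C-0) consistency in mean for arm 0
    (hC0 : ∀ (w : 𝓦) (e : ℰ), 0 < P {ω | A ω = 0 ∧ W ω = w ∧ E ω = e ∧ V ω = 1} →
      condMean P Y0 {ω | A ω = 0 ∧ W ω = w ∧ E ω = e ∧ V ω = 1} =
        condMean P Y {ω | A ω = 0 ∧ W ω = w ∧ E ω = e ∧ V ω = 1})
    -- (P-0) positivity for arm 0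
    (hP0 : ∀ (w : 𝓦) (e : ℰ), 0 < P {ω | W ω = w ∧ E ω = e ∧ V ω = 1} →
      0 < P {ω | A ω = 0 ∧ W ω = w ∧ E ω = e ∧ V ω = 1})
    :
    condMean P Y0 {ω | V ω = 1} =
      ∑ w : 𝓦, ∑ e : ℰ,
        if 0 < P {ω | W ω = w ∧ E ω = e ∧ V ω = 1} then
          condMean P Y {ω | A ω = 0 ∧ W ω = w ∧ E ω = e ∧ V ω = 1} *
            ((P {ω | W ω = w ∧ E ω = e ∧ V ω = 1}).toReal / (P {ω | V ω = 1}).toReal)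
        else 0 := by
  classical
  have hSmeas : ∀ (w : 𝓦) (e : ℰ), MeasurableSet {ω | W ω = w ∧ E ω = e ∧ V ω = 1} := by
    intro w e
    have : {ω | W ω = w ∧ E ω = e ∧ V ω = 1}
        = W ⁻¹' {w} ∩ (E ⁻¹' {e} ∩ V ⁻¹' {1}) := by
      ext ω; simp [Set.mem_inter_iff, and_assoc]
    rw [this]
    exact (hW (measurableSet_singleton w)).inter
      ((hE (measurableSet_singleton e)).inter (hV (measurableSet_singleton 1)))
  have hpt : ∀ ω, ({ω | V ω = 1} : Set Ω).indicator Y0 ω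
      = ∑ w : 𝓦, ∑ e : ℰ, ({ω | W ω = w ∧ E ω = e ∧ V ω = 1} : Set Ω).indicator Y0 ω := by
    intro ω
    by_cases hv : V ω = 1
    · rw [Set.indicator_of_mem (show ω ∈ {ω | V ω = 1} from hv)]
      rw [Finset.sum_eq_single (W ω)]
      · rw [Finset.sum_eq_single (E ω)]
        · rw [Set.indicator_of_mem (show ω ∈ {ω' | W ω' = W ω ∧ E ω' = E ω ∧ V ω' = 1} from ⟨rfl, rfl, hv⟩)]
        · intro e _ he
          exact Set.indicator_of_notMem (fun h => he h.2.1.symm) _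
        · simp
      · intro w _ hw
        exact Finset.sum_eq_zero fun e _ =>
          Set.indicator_of_notMem (fun h => hw h.1.symm) _
      · simp
    · rw [Set.indicator_of_notMem (show ω ∉ {ω | V ω = 1} from hv)]
      symm
      exact Finset.sum_eq_zero fun w _ => Finset.sum_eq_zero fun e _ =>
        Set.indicator_of_notMem (fun h => hv h.2.2) _
  have hint : ∫ ω, ({ω | V ω = 1} : Set Ω).indicator Y0 ω ∂P
      = ∑ w : 𝓦, ∑ e : ℰ,
          ∫ ω, ({ω | W ω = w ∧ E ω = e ∧ V ω = 1} : Set Ω).indicator Y0 ω ∂P := by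
    have h1 : ∫ ω, ({ω | V ω = 1} : Set Ω).indicator Y0 ω ∂P
        = ∫ ω, ∑ w : 𝓦, ∑ e : ℰ,
            ({ω | W ω = w ∧ E ω = e ∧ V ω = 1} : Set Ω).indicator Y0 ω ∂P :=
      integral_congr_ae (Filter.Eventually.of_forall hpt)
    rw [h1, integral_finset_sum _ (fun w _ =>
      integrable_finset_sum _ (fun e _ => hY0.indicator (hSmeas w e)))]
    exact Finset.sum_congr rfl fun w _ =>
      integral_finset_sum _ fun e _ => hY0.indicator (hSmeas w e)
  have lhs : condMean P Y0 {ω | V ω = 1}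
      = (∑ w : 𝓦, ∑ e : ℰ,
          ∫ ω, ({ω | W ω = w ∧ E ω = e ∧ V ω = 1} : Set Ω).indicator Y0 ω ∂P)
        / (P {ω | V ω = 1}).toReal := by
    unfold condMean; rw [hint]
  rw [lhs, Finset.sum_div]
  refine Finset.sum_congr rfl fun w _ => ?_
  rw [Finset.sum_div]
  refine Finset.sum_congr rfl fun e _ => ?_
  by_cases hpos : 0 < P {ω | W ω = w ∧ E ω = e ∧ V ω = 1}
  · rw [if_pos hpos]
    have hA0 := hP0 w e hpos
    have hId : condMean P Y0 {ω | W ω = w ∧ E ω = e ∧ V ω = 1}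
        = condMean P Y {ω | A ω = 0 ∧ W ω = w ∧ E ω = e ∧ V ω = 1} :=
      (hI0 w e hA0).trans (hC0 w e hA0)
    have hne : (P {ω | W ω = w ∧ E ω = e ∧ V ω = 1}).toReal ≠ 0 :=
      (ENNReal.toReal_pos hpos.ne' (measure_ne_top P _)).ne'
    have hi : ∫ ω, ({ω | W ω = w ∧ E ω = e ∧ V ω = 1} : Set Ω).indicator Y0 ω ∂P
        = condMean P Y0 {ω | W ω = w ∧ E ω = e ∧ V ω = 1}
          * (P {ω | W ω = w ∧ E ω = e ∧ V ω = 1}).toReal := by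
      unfold condMean; field_simp
    rw [hi, hId, mul_div_assoc]
  · rw [if_neg hpos]
    have h0 : P {ω | W ω = w ∧ E ω = e ∧ V ω = 1} = 0 :=
      le_antisymm (not_lt.mp hpos) (zero_le)
    rw [integral_indicator (hSmeas w e), Measure.restrict_eq_zero.mpr h0,
      integral_zero_measure, zero_div]
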